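/- Let n < m < 3n with m+n-1 divisible by 4. There exists a balanced bipartite graph G with parts X, Y each of size m+n-1 and minimum degree exactly (3/4)(m+n-1), together with a red-blue edge-coloring of G, such that G has no red connected matching of size m and no blue connected matching of size n. -/

import Mathlib

open SimpleGraph Set

/-- A connected `k`-matching in a graph `H`: a matching of `k` edges all of whose
vertices lie in a single connected component of `H`. -/
def ConnMatching {V : Type*} [Fintype V] (H : SimpleGraph V) (k : ℕ) : Prop :=
  ∃ M : H.Subgraph, M.IsMatching ∧ M.edgeSet.ncard = k ∧
    ∃ c : H.ConnectedComponent, ∀ v ∈ M.verts, H.connectedComponentMk v = c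

section Aux

variable {N q : ℕ}

/-- The blue graph: complete bipartite between matching blocks. -/
def blueG (N q : ℕ) : SimpleGraph (Fin N ⊕ Fin N) where
  Adj u v := match u, v with
    | .inl x, .inr y => x.val / q = y.val / q
    | .inr y, .inl x => x.val / q = y.val / q
    | _, _ => False
  symm := ⟨by rintro (x | x) (y | y) h <;> exact h⟩
  loopless := ⟨by rintro (x | x) h <;> exact h⟩

/-- The red graph. -/
def redG (N q : ℕ) : SimpleGraph (Fin N ⊕ Fin N) where
  Adj u v := match u, v with
    | .inl x, .inr y => (x.val / q < 2 ∧ 2 ≤ y.val / q) ∨ (2 ≤ x.val / q ∧ y.val / q < 2)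
    | .inr y, .inl x => (x.val / q < 2 ∧ 2 ≤ y.val / q) ∨ (2 ≤ x.val / q ∧ y.val / q < 2)
    | _, _ => False
  symm := ⟨by rintro (x | x) (y | y) h <;> exact h⟩
  loopless := ⟨by rintro (x | x) h <;> exact h⟩

lemma ncard_fin_ico (N a b : ℕ) (hbN : b ≤ N) :
    ({x : Fin N | a ≤ x.val ∧ x.val < b} : Set (Fin N)).ncard = b - a := by
  classical
  rw [Set.ncard_eq_toFinset_card', ← Nat.card_Ico a b]
  apply Finset.card_bij (fun (x : Fin N) _ => x.val)
  · intro x hx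
    rw [Set.mem_toFinset] at hx
    exact Finset.mem_Ico.2 hx
  · intro x hx y hy h
    exact Fin.val_injective h
  · intro t ht
    rw [Finset.mem_Ico] at ht
    exact ⟨⟨t, lt_of_lt_of_le ht.2 hbN⟩, by rw [Set.mem_toFinset]; exact ht, rfl⟩

lemma ncard_fin_ico_le (N a b : ℕ) :
    ({x : Fin N | a ≤ x.val ∧ x.val < b} : Set (Fin N)).ncard ≤ b - a := by
  have h : {x : Fin N | a ≤ x.val ∧ x.val < b} =
      {x : Fin N | a ≤ x.val ∧ x.val < min b N} := by
    ext x
    simp only [Set.mem_setOf_eq, lt_min_iff]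
    exact and_congr_right fun _ => ⟨fun h => ⟨h, x.isLt⟩, fun h => h.1⟩
  rw [h, ncard_fin_ico N a (min b N) (min_le_right _ _)]
  exact Nat.sub_le_sub_right (min_le_left _ _) _

lemma ncard_fin_two_ico (N a b c d : ℕ) (hbc : b ≤ c) (hcd : c ≤ d) (hdN : d ≤ N) :
    ({z : Fin N | (a ≤ z.val ∧ z.val < b) ∨ (c ≤ z.val ∧ z.val < d)} : Set (Fin N)).ncard
      = (b - a) + (d - c) := by
  have hsplit : {z : Fin N | (a ≤ z.val ∧ z.val < b) ∨ (c ≤ z.val ∧ z.val < d)}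
      = {z : Fin N | a ≤ z.val ∧ z.val < b} ∪ {z : Fin N | c ≤ z.val ∧ z.val < d} := by
    ext z; simp [Set.mem_setOf_eq, Set.mem_union]
  have hdisj : Disjoint {z : Fin N | a ≤ z.val ∧ z.val < b}
      {z : Fin N | c ≤ z.val ∧ z.val < d} := by
    rw [Set.disjoint_left]
    intro z hz hz'
    simp only [Set.mem_setOf_eq] at hz hz'
    omega
  rw [hsplit, Set.ncard_union_eq hdisj (Set.toFinite _) (Set.toFinite _),
    ncard_fin_ico N a b (by omega), ncard_fin_ico N c d hdN]

/-- Bound on the size of a connected matching in a bipartite graph whose components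
respect an invariant `f`. -/
lemma matching_bound (H : SimpleGraph (Fin N ⊕ Fin N))
    (f : Fin N ⊕ Fin N → ℕ)
    (hf : ∀ u v, H.Adj u v → f u = f v)
    (hbip : ∀ u v, H.Adj u v → (∃ x y, u = Sum.inl x ∧ v = Sum.inr y) ∨
      (∃ x y, u = Sum.inr y ∧ v = Sum.inl x))
    {k : ℕ} (hk : 0 < k) (hcm : ConnMatching H k) :
    ∃ x₀ : Fin N, k ≤ {x : Fin N | f (Sum.inl x) = f (Sum.inl x₀)}.ncard := by
  classical
  obtain ⟨M, hM, hcard, c, hc⟩ := hcm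
  have hE : ∀ e ∈ M.edgeSet, ∃ x w, e = s(Sum.inl x, w) ∧ M.Adj (Sum.inl x) w := by
    intro e he
    induction e with
    | h a b =>
      rw [SimpleGraph.Subgraph.mem_edgeSet] at he
      rcases hbip a b (M.adj_sub he) with ⟨x, y, rfl, rfl⟩ | ⟨x, y, rfl, rfl⟩
      · exact ⟨x, Sum.inr y, rfl, he⟩
      · exact ⟨x, Sum.inr y, Sym2.eq_swap, he.symm⟩
  have hreach : ∀ u v : Fin N ⊕ Fin N, H.Reachable u v → f u = f v := by
    rintro u v ⟨w⟩
    induction w with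
    | nil => rfl
    | cons h _ ih => exact (hf _ _ h).trans ih
  have hcomp : ∀ u ∈ M.verts, ∀ v ∈ M.verts, f u = f v := by
    intro u hu v hv
    exact hreach u v (SimpleGraph.ConnectedComponent.exact ((hc u hu).trans (hc v hv).symm))
  have hne : M.edgeSet.Nonempty := by
    rw [Set.nonempty_iff_ne_empty]
    intro h
    rw [h, Set.ncard_empty] at hcard
    omega
  obtain ⟨e₀, he₀⟩ := hne
  obtain ⟨x₀, w₀, he₀eq, hadj₀⟩ := hE e₀ he₀
  refine ⟨x₀, ?_⟩
  rw [← hcard]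
  haveI : Inhabited (Fin N) := ⟨x₀⟩
  set φ : Sym2 (Fin N ⊕ Fin N) → Fin N := fun e =>
    if h : ∃ x w, e = s(Sum.inl x, w) ∧ M.Adj (Sum.inl x) w then h.choose else default with hφ
  have hspec : ∀ e ∈ M.edgeSet, ∃ w, e = s(Sum.inl (φ e), w) ∧ M.Adj (Sum.inl (φ e)) w := by
    intro e he
    have h := hE e he
    rw [hφ]
    simp only [dif_pos h]
    exact h.choose_spec
  apply Set.ncard_le_ncard_of_injOn φ
  · intro e he
    obtain ⟨w, heq, hadj⟩ := hspec e he
    exact hcomp _ (M.edge_vert hadj) _ (M.edge_vert hadj₀)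
  · intro e he e' he' hee
    obtain ⟨w, heq, hadj⟩ := hspec e he
    obtain ⟨w', heq', hadj'⟩ := hspec e' he'
    rw [hee] at heq hadj
    have hww : w = w' := by
      obtain ⟨u, hu, huniq⟩ := hM (M.edge_vert hadj)
      exact (huniq w hadj).trans (huniq w' hadj').symm
    rw [hww] at heq
    exact heq.trans heq'.symm

end Aux

theorem stmt_6 (m n q : ℕ) (hnm : n < m) (hm3n : m < 3 * n) (h4 : m + n - 1 = 4 * q) :
    ∃ G R B : SimpleGraph (Fin (m + n - 1) ⊕ Fin (m + n - 1)),
      -- G is bipartite with the two copies of `Fin (m+n-1)` as parts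
      (∀ x y : Fin (m + n - 1), ¬ G.Adj (.inl x) (.inl y) ∧ ¬ G.Adj (.inr x) (.inr y)) ∧
      -- the minimum degree of G is exactly (3/4)(m+n-1) = 3q
      (∀ v, 3 * q ≤ (G.neighborSet v).ncard) ∧ (∃ v, (G.neighborSet v).ncard = 3 * q) ∧
      -- a red-blue edge-coloring of G
      Disjoint R B ∧ R ⊔ B = G ∧
      -- with no red connected m-matching and no blue connected n-matching
      ¬ ConnMatching R m ∧ ¬ ConnMatching B n := by
  set N := m + n - 1 with hN
  have hq : 0 < q := by omega
  have hN4 : N = 4 * q := h4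
  -- arithmetic facts about division into blocks
  have hlt : ∀ z : Fin N, z.val < 4 * q := fun z => hN4 ▸ z.isLt
  have hdivlt : ∀ z : Fin N, z.val / q < 4 := by
    intro z
    rw [Nat.div_lt_iff_lt_mul hq]
    have := hlt z
    omega
  have hdiv : ∀ (z : Fin N) (i : ℕ),
      z.val / q = i ↔ i * q ≤ z.val ∧ z.val < (i + 1) * q := by
    intro z i
    constructor
    · rintro rfl
      exact ⟨Nat.div_mul_le_self _ _, (Nat.div_lt_iff_lt_mul hq).1 (Nat.lt_succ_self _)⟩
    · rintro ⟨h1, h2⟩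
      have l1 : i ≤ z.val / q := by rw [Nat.le_div_iff_mul_le hq]; exact h1
      have l2 : z.val / q < i + 1 := by rw [Nat.div_lt_iff_lt_mul hq]; exact h2
      omega
  have e2 : ∀ z : Fin N, 2 ≤ z.val / q ↔ 2 * q ≤ z.val := by
    intro z; rw [Nat.le_div_iff_mul_le hq]
  have e3 : ∀ z : Fin N, z.val / q < 2 ↔ z.val < 2 * q := by
    intro z; rw [Nat.div_lt_iff_lt_mul hq]
  set R := redG N q with hR
  set B := blueG N q with hB
  -- the key count: the neighbor "profile" sets all have size 3q
  have key : ∀ i : ℕ, i < 4 →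
      ({z : Fin N | z.val / q = i ∨ (i < 2 ∧ 2 ≤ z.val / q) ∨ (2 ≤ i ∧ z.val / q < 2)} :
        Set (Fin N)).ncard = 3 * q := by
    intro i hi
    interval_cases i
    · have hs : {z : Fin N | z.val / q = 0 ∨ (0 < 2 ∧ 2 ≤ z.val / q) ∨ (2 ≤ 0 ∧ z.val / q < 2)}
          = {z : Fin N | (0 ≤ z.val ∧ z.val < 1 * q) ∨ (2 * q ≤ z.val ∧ z.val < 4 * q)} := by
        ext z
        have d1 := hdiv z 0; have d2 := e2 z; have d3 := e3 z; have d4 := hlt z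
        simp only [Set.mem_setOf_eq]
        omega
      rw [hs, ncard_fin_two_ico N 0 (1 * q) (2 * q) (4 * q) (by omega) (by omega) (by omega)]
      omega
    · have hs : {z : Fin N | z.val / q = 1 ∨ (1 < 2 ∧ 2 ≤ z.val / q) ∨ (2 ≤ 1 ∧ z.val / q < 2)}
          = {z : Fin N | (1 * q ≤ z.val ∧ z.val < 2 * q) ∨ (2 * q ≤ z.val ∧ z.val < 4 * q)} := by
        ext z
        have d1 := hdiv z 1; have d2 := e2 z; have d3 := e3 z; have d4 := hlt z
        simp only [Set.mem_setOf_eq]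
        omega
      rw [hs, ncard_fin_two_ico N (1 * q) (2 * q) (2 * q) (4 * q) (by omega) (by omega) (by omega)]
      omega
    · have hs : {z : Fin N | z.val / q = 2 ∨ (2 < 2 ∧ 2 ≤ z.val / q) ∨ (2 ≤ 2 ∧ z.val / q < 2)}
          = {z : Fin N | (0 ≤ z.val ∧ z.val < 2 * q) ∨ (2 * q ≤ z.val ∧ z.val < 3 * q)} := by
        ext z
        have d1 := hdiv z 2; have d2 := e2 z; have d3 := e3 z; have d4 := hlt z
        simp only [Set.mem_setOf_eq]
        omega
      rw [hs, ncard_fin_two_ico N 0 (2 * q) (2 * q) (3 * q) (by omega) (by omega) (by omega)]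
      omega
    · have hs : {z : Fin N | z.val / q = 3 ∨ (3 < 2 ∧ 2 ≤ z.val / q) ∨ (2 ≤ 3 ∧ z.val / q < 2)}
          = {z : Fin N | (0 ≤ z.val ∧ z.val < 2 * q) ∨ (3 * q ≤ z.val ∧ z.val < 4 * q)} := by
        ext z
        have d1 := hdiv z 3; have d2 := e2 z; have d3 := e3 z; have d4 := hlt z
        simp only [Set.mem_setOf_eq]
        omega
      rw [hs, ncard_fin_two_ico N 0 (2 * q) (3 * q) (4 * q) (by omega) (by omega) (by omega)]
      omega
  have hdeg : ∀ v, ((R ⊔ B).neighborSet v).ncard = 3 * q := by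
    intro v
    rcases v with x | y
    · have hset : (R ⊔ B).neighborSet (Sum.inl x) = Sum.inr ''
          {z : Fin N | z.val / q = x.val / q ∨ (x.val / q < 2 ∧ 2 ≤ z.val / q) ∨
            (2 ≤ x.val / q ∧ z.val / q < 2)} := by
        ext u
        rcases u with y | y
        · simp only [SimpleGraph.mem_neighborSet, SimpleGraph.sup_adj, Set.mem_image]
          constructor
          · rintro (h | h) <;> exact h.elim
          · rintro ⟨z, _, h⟩; exact absurd h (by simp)
        · simp only [SimpleGraph.mem_neighborSet, SimpleGraph.sup_adj, Set.mem_image]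
          constructor
          · rintro (h | h)
            · exact ⟨y, by rw [hR] at h; exact Or.inr (by
                rcases h with ⟨h1, h2⟩ | ⟨h1, h2⟩
                · exact Or.inl ⟨h1, h2⟩
                · exact Or.inr ⟨h1, h2⟩), rfl⟩
            · exact ⟨y, Or.inl (by rw [hB] at h; exact Eq.symm (show x.val / q = y.val / q from h)), rfl⟩
          · rintro ⟨z, hz, hzeq⟩
            have : z = y := by injection hzeq
            subst this
            simp only [Set.mem_setOf_eq] at hz
            rcases hz with h | ⟨h1, h2⟩ | ⟨h1, h2⟩
            · exact Or.inr (by rw [hB]; exact h.symm)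
            · exact Or.inl (by rw [hR]; exact Or.inl ⟨h1, h2⟩)
            · exact Or.inl (by rw [hR]; exact Or.inr ⟨h1, h2⟩)
      rw [hset, Set.ncard_image_of_injective _ Sum.inr_injective]
      exact key _ (hdivlt x)
    · have hset : (R ⊔ B).neighborSet (Sum.inr y) = Sum.inl ''
          {z : Fin N | z.val / q = y.val / q ∨ (y.val / q < 2 ∧ 2 ≤ z.val / q) ∨
            (2 ≤ y.val / q ∧ z.val / q < 2)} := by
        ext u
        rcases u with x | x
        · simp only [SimpleGraph.mem_neighborSet, SimpleGraph.sup_adj, Set.mem_image]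
          constructor
          · rintro (h | h)
            · refine ⟨x, ?_, rfl⟩
              rw [hR] at h
              rcases (h : (x.val / q < 2 ∧ 2 ≤ y.val / q) ∨ (2 ≤ x.val / q ∧ y.val / q < 2)) with
                ⟨h1, h2⟩ | ⟨h1, h2⟩
              · exact Or.inr (Or.inr ⟨by omega, by
                  have := e3 x; have := e2 x; omega⟩)
              · exact Or.inr (Or.inl ⟨h2, h1⟩)
            · exact ⟨x, Or.inl (by rw [hB] at h; exact (h : x.val / q = y.val / q)), rfl⟩
          · rintro ⟨z, hz, hzeq⟩
            have : z = x := by injection hzeq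
            subst this
            simp only [Set.mem_setOf_eq] at hz
            rcases hz with h | ⟨h1, h2⟩ | ⟨h1, h2⟩
            · exact Or.inr (by rw [hB]; exact h)
            · exact Or.inl (by rw [hR]; exact Or.inr ⟨h2, h1⟩)
            · exact Or.inl (by rw [hR]; exact Or.inl ⟨h2, h1⟩)
        · simp only [SimpleGraph.mem_neighborSet, SimpleGraph.sup_adj, Set.mem_image]
          constructor
          · rintro (h | h) <;> exact h.elim
          · rintro ⟨z, _, h⟩; exact absurd h (by simp)
      rw [hset, Set.ncard_image_of_injective _ Sum.inl_injective]
      exact key _ (hdivlt y)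
  have hN0 : 0 < N := by omega
  refine ⟨R ⊔ B, R, B, ?_, fun v => (hdeg v).ge, ⟨Sum.inl ⟨0, hN0⟩, hdeg _⟩, ?_, rfl, ?_, ?_⟩
  -- bipartite
  · intro x y
    constructor
    · rintro (h | h) <;> exact h
    · rintro (h | h) <;> exact h
  -- disjoint
  · rw [disjoint_iff]
    ext u v
    simp only [SimpleGraph.inf_adj, SimpleGraph.bot_adj, iff_false]
    rintro ⟨h1, h2⟩
    rcases u with x | x <;> rcases v with y | y
    · exact h1
    · rw [hR] at h1; rw [hB] at h2
      rcases (h1 : (x.val / q < 2 ∧ 2 ≤ y.val / q) ∨ (2 ≤ x.val / q ∧ y.val / q < 2)) with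
        ⟨ha, hb⟩ | ⟨ha, hb⟩ <;>
      · have heq : x.val / q = y.val / q := h2
        omega
    · rw [hR] at h1; rw [hB] at h2
      rcases (h1 : (y.val / q < 2 ∧ 2 ≤ x.val / q) ∨ (2 ≤ y.val / q ∧ x.val / q < 2)) with
        ⟨ha, hb⟩ | ⟨ha, hb⟩ <;>
      · have heq : y.val / q = x.val / q := h2
        omega
    · exact h1
  -- no red connected m-matching
  · intro hcm
    have hmb := matching_bound (redG N q)
      (fun v => Sum.elim (fun x : Fin N => if x.val / q < 2 then 0 else 1)
        (fun y : Fin N => if y.val / q < 2 then 1 else 0) v)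
      ?_ ?_ (by omega : 0 < m) (by rw [hR] at hcm; exact hcm)
    · obtain ⟨x₀, hx₀⟩ := hmb
      simp only [Sum.elim_inl] at hx₀
      by_cases h0 : x₀.val / q < 2
      · have hseq : {x : Fin N | (if x.val / q < 2 then 0 else 1) =
            (if x₀.val / q < 2 then 0 else 1)} = {x : Fin N | 0 ≤ x.val ∧ x.val < 2 * q} := by
          ext x
          simp only [Set.mem_setOf_eq, if_pos h0]
          have := e3 x
          by_cases hx : x.val / q < 2 <;> simp [hx] <;> omega
        rw [hseq] at hx₀
        have := ncard_fin_ico_le N 0 (2 * q)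
        omega
      · have hseq : {x : Fin N | (if x.val / q < 2 then 0 else 1) =
            (if x₀.val / q < 2 then 0 else 1)} = {x : Fin N | 2 * q ≤ x.val ∧ x.val < 4 * q} := by
          ext x
          simp only [Set.mem_setOf_eq, if_neg h0]
          have := e3 x; have := e2 x; have := hlt x
          by_cases hx : x.val / q < 2 <;> simp [hx] <;> omega
        rw [hseq] at hx₀
        have := ncard_fin_ico_le N (2 * q) (4 * q)
        omega
    · rintro (x | x) (y | y) h
      · exact h.elim
      · rcases (h : (x.val / q < 2 ∧ 2 ≤ y.val / q) ∨ (2 ≤ x.val / q ∧ y.val / q < 2)) with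
          ⟨h1, h2⟩ | ⟨h1, h2⟩ <;>
          simp [Sum.elim_inl, Sum.elim_inr, h1, h2, Nat.not_lt.2 h1, Nat.not_lt.2 h2] <;> split_ifs <;> omega
      · rcases (h : (y.val / q < 2 ∧ 2 ≤ x.val / q) ∨ (2 ≤ y.val / q ∧ x.val / q < 2)) with
          ⟨h1, h2⟩ | ⟨h1, h2⟩ <;>
          simp [Sum.elim_inl, Sum.elim_inr, h1, h2, Nat.not_lt.2 h1, Nat.not_lt.2 h2] <;> split_ifs <;> omega
      · exact h.elim
    · rintro (x | x) (y | y) h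
      · exact h.elim
      · exact Or.inl ⟨x, y, rfl, rfl⟩
      · exact Or.inr ⟨y, x, rfl, rfl⟩
      · exact h.elim
  -- no blue connected n-matching
  · intro hcm
    have hmb := matching_bound (blueG N q)
      (fun v => Sum.elim (fun x : Fin N => x.val / q) (fun y : Fin N => y.val / q) v)
      ?_ ?_ (by omega : 0 < n) (by rw [hB] at hcm; exact hcm)
    · obtain ⟨x₀, hx₀⟩ := hmb
      simp only [Sum.elim_inl] at hx₀
      obtain ⟨i, hi, hieq⟩ : ∃ i, i < 4 ∧ x₀.val / q = i := ⟨_, hdivlt x₀, rfl⟩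
      rw [hieq] at hx₀
      have hseq : {x : Fin N | x.val / q = i} =
          {x : Fin N | i * q ≤ x.val ∧ x.val < (i + 1) * q} := by
        ext x
        simp only [Set.mem_setOf_eq]
        exact hdiv x i
      rw [hseq] at hx₀
      have := ncard_fin_ico_le N (i * q) ((i + 1) * q)
      interval_cases i <;> omega
    · rintro (x | x) (y | y) h
      · exact h.elim
      · exact (h : x.val / q = y.val / q)
      · exact Eq.symm (show y.val / q = x.val / q from h)
      · exact h.elim
    · rintro (x | x) (y | y) h
      · exact h.elim
      · exact Or.inl ⟨x, y, rfl, rfl⟩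
      · exact Or.inr ⟨y, x, rfl, rfl⟩
      · exact h.elim
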